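/- Let X be a compact Hausdorff space that is locally connected, and let T be a topological group acting continuously on X. Then the equicontinuous structure relation S_eq of the flow (X,T) is monotone, i.e. every equivalence class of S_eq is a connected subset of X; equivalently, the factor map from X to the maximal equicontinuous factor X/S_eq has connected point preimages. -/

import Mathlib

open Topology

open Set


set_option linter.unusedSectionVars false
set_option linter.unusedVariables false
set_option maxHeartbeats 1000000

section Helpers
variable {X : Type*} [TopologicalSpace X]

lemma setoid_isClosedMap [CompactSpace X] (S : Setoid X)
    (h : IsClosed {p : X × X | S.r p.1 p.2}) : IsClosedMap (Quotient.mk S) := by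
  intro C hC
  have hq : IsQuotientMap (Quotient.mk S) := isQuotientMap_quot_mk
  rw [← hq.isClosed_preimage]
  have he : Quotient.mk S ⁻¹' (Quotient.mk S '' C) =
      Prod.snd '' ({p : X × X | S.r p.1 p.2} ∩ C ×ˢ univ) := by
    ext x
    simp only [mem_preimage, mem_image, mem_inter_iff, mem_setOf_eq, mem_prod, mem_univ,
      and_true, Prod.exists]
    constructor
    · rintro ⟨c, hc, hcx⟩
      exact ⟨c, x, ⟨Quotient.eq.mp hcx, hc⟩, rfl⟩
    · rintro ⟨c, x', ⟨hr, hc⟩, rfl⟩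
      exact ⟨c, hc, Quotient.sound hr⟩
  rw [he]
  exact isClosedMap_snd_of_compactSpace _ (h.inter (hC.prod isClosed_univ))


lemma setoid_fiber_closed (S : Setoid X)
    (h : IsClosed {p : X × X | S.r p.1 p.2}) (x : X) : IsClosed {z | S.r x z} :=
  h.preimage (Continuous.prodMk_right x)

lemma setoid_t2 [CompactSpace X] [T2Space X] (S : Setoid X)
    (h : IsClosed {p : X × X | S.r p.1 p.2}) : T2Space (Quotient S) := by
  have hcm := setoid_isClosedMap S h
  constructor
  intro a b hab
  obtain ⟨x, rfl⟩ := Quotient.exists_rep a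
  obtain ⟨y, rfl⟩ := Quotient.exists_rep b
  have hF : IsClosed {z | S.r x z} := setoid_fiber_closed S h x
  have hG : IsClosed {z | S.r y z} := setoid_fiber_closed S h y
  have hdis : Disjoint {z | S.r x z} {z | S.r y z} := by
    rw [Set.disjoint_left]
    intro z hz hz'
    exact hab (Quotient.sound (S.trans hz (S.symm hz')))
  obtain ⟨U, V, hUo, hVo, hFU, hGV, hUV⟩ :=
    SeparatedNhds.of_isCompact_isCompact hF.isCompact hG.isCompact hdis
  refine ⟨(Quotient.mk S '' Uᶜ)ᶜ, (Quotient.mk S '' Vᶜ)ᶜ, (hcm _ hUo.isClosed_compl).isOpen_compl,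
    (hcm _ hVo.isClosed_compl).isOpen_compl, ?_, ?_, ?_⟩
  · rintro ⟨z, hz, hzx⟩
    exact hz (hFU (Quotient.eq.mp hzx.symm))
  · rintro ⟨z, hz, hzy⟩
    exact hz (hGV (Quotient.eq.mp hzy.symm))
  · rw [Set.disjoint_left]
    rintro c hc hc'
    obtain ⟨z, rfl⟩ := Quotient.exists_rep c
    by_cases hzU : z ∈ U
    · by_cases hzV : z ∈ V
      · exact hUV.le_bot ⟨hzU, hzV⟩
      · exact hc' ⟨z, hzV, rfl⟩
    · exact hc ⟨z, hzU, rfl⟩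


end Helpers

lemma lebesgue_nhdsSet {Y : Type*} [TopologicalSpace Y] [CompactSpace Y] [T2Space Y]
    {ι : Sort*} {U : ι → Set Y} (hU : ∀ i, IsOpen (U i)) (hc : univ ⊆ ⋃ i, U i) :
    ∃ γ ∈ 𝓝ˢ (diagonal Y), ∀ u : Y, ∃ i, {v | (u, v) ∈ γ} ⊆ U i := by
  letI : UniformSpace Y := uniformSpaceOfCompactR1
  obtain ⟨V, hV, hVU⟩ := lebesgue_number_lemma isCompact_univ hU hc
  refine ⟨V, ?_, fun u => ?_⟩
  · rwa [nhdsSet_diagonal_eq_uniformity]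
  · obtain ⟨i, hi⟩ := hVU u (mem_univ u)
    exact ⟨i, hi⟩

lemma triangle_nhdsSet {Y : Type*} [TopologicalSpace Y] [CompactSpace Y] [T2Space Y]
    {d : Set (Y × Y)} (hd : d ∈ 𝓝ˢ (diagonal Y)) :
    ∃ w : Set (Y × Y), IsOpen w ∧ diagonal Y ⊆ w ∧
      ∀ a b c : Y, (a, b) ∈ w → (a, c) ∈ w → (b, c) ∈ d := by
  letI : UniformSpace Y := uniformSpaceOfCompactR1
  rw [nhdsSet_diagonal_eq_uniformity] at hd
  obtain ⟨t, ht, htsymm, htd⟩ := comp_symm_mem_uniformity_sets hd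
  obtain ⟨w, ⟨hw, hwo⟩, hwt⟩ := uniformity_hasBasis_open.mem_iff.mp ht
  refine ⟨w, hwo, fun p hp => ?_, fun a b c hab hac => ?_⟩
  · obtain ⟨z, rfl⟩ : ∃ z : Y, (z, z) = p := ⟨p.1, by ext <;> simp [hp.symm]⟩
    exact refl_mem_uniformity hw
  · exact htd ⟨a, htsymm.symm _ _ (hwt hab), hwt hac⟩

/-- In a compact T2 space, around any connected component with `C ×ˢ C ⊆ n` open,
there is a clopen set with the same property. -/
lemma clopen_square_small {Z : Type*} [TopologicalSpace Z] [CompactSpace Z] [T2Space Z]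
    (z : Z) {n : Set (Z × Z)} (hn : IsOpen n)
    (h : connectedComponent z ×ˢ connectedComponent z ⊆ n) :
    ∃ A : Set Z, IsClopen A ∧ z ∈ A ∧ A ×ˢ A ⊆ n := by
  let ι := { s : Set Z // IsClopen s ∧ z ∈ s }
  haveI : Nonempty ι := ⟨⟨univ, isClopen_univ, mem_univ z⟩⟩
  have key : ∃ i : ι, (univ : Set (Z × Z)) ∩ ((i.1 ×ˢ i.1) \ n) = ∅ := by
    apply isCompact_univ.elim_directed_family_closed
      (fun i : ι => (i.1 ×ˢ i.1) \ n)
    · exact fun i => ((i.2.1.1.prod i.2.1.1)).sdiff hn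
    · rw [univ_inter, eq_empty_iff_forall_notMem]
      rintro ⟨u, v⟩ huv
      rw [mem_iInter] at huv
      have hu : u ∈ connectedComponent z := by
        rw [connectedComponent_eq_iInter_isClopen]
        exact mem_iInter.mpr fun i => (huv i).1.1
      have hv : v ∈ connectedComponent z := by
        rw [connectedComponent_eq_iInter_isClopen]
        exact mem_iInter.mpr fun i => (huv i).1.2
      exact (huv ⟨univ, isClopen_univ, mem_univ z⟩).2 (h ⟨hu, hv⟩)
    · intro i j
      refine ⟨⟨i.1 ∩ j.1, i.2.1.inter j.2.1, ⟨i.2.2, j.2.2⟩⟩, ?_, ?_⟩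
      · rintro ⟨u, v⟩ ⟨⟨hu, hv⟩, hnv⟩
        exact ⟨⟨hu.1, hv.1⟩, hnv⟩
      · rintro ⟨u, v⟩ ⟨⟨hu, hv⟩, hnv⟩
        exact ⟨⟨hu.2, hv.2⟩, hnv⟩
  obtain ⟨i, hi⟩ := key
  refine ⟨i.1, i.2.1, i.2.2, fun p hp => ?_⟩
  by_contra hpn
  rw [univ_inter, eq_empty_iff_forall_notMem] at hi
  exact hi p ⟨hp, hpn⟩

open Classical in
/-- A closed set `F` in a compact T2 space, with an open `η ⊇` the "same component in `F`"
relation, can be covered by finitely many disjoint open sets with squares inside `η`. -/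
lemma fiber_discretize {X : Type*} [TopologicalSpace X] [CompactSpace X] [T2Space X]
    {F : Set X} (hF : IsClosed F) {η : Set (X × X)} (hη : IsOpen η)
    (hcomp : ∀ z ∈ F, ∀ u ∈ connectedComponentIn F z, ∀ v ∈ connectedComponentIn F z,
      (u, v) ∈ η) :
    ∃ (n : ℕ) (U : Fin n → Set X), (∀ i, IsOpen (U i)) ∧
      (∀ i j, i ≠ j → Disjoint (U i) (U j)) ∧ F ⊆ ⋃ i, U i ∧
      ∀ i, ∀ u ∈ U i, ∀ v ∈ U i, (u, v) ∈ η := by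
  haveI : CompactSpace ↥F := isCompact_iff_compactSpace.mp hF.isCompact
  set nh : Set (↥F × ↥F) := (Prod.map (↑) (↑) : ↥F × ↥F → X × X) ⁻¹' η with hnh
  have hnho : IsOpen nh := hη.preimage (continuous_subtype_val.prodMap continuous_subtype_val)
  have hA : ∀ z : ↥F, ∃ A : Set ↥F, IsClopen A ∧ z ∈ A ∧ A ×ˢ A ⊆ nh := by
    intro z
    apply clopen_square_small z hnho
    rintro ⟨u, v⟩ ⟨hu, hv⟩
    have him : connectedComponentIn F z.1 = (↑) '' connectedComponent z := by
      rw [connectedComponentIn_eq_image z.2]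
    exact hcomp z.1 z.2 u.1 (him ▸ mem_image_of_mem _ hu) v.1 (him ▸ mem_image_of_mem _ hv)
  choose A hAclopen hAmem hAsq using hA
  obtain ⟨s, hs⟩ := isCompact_univ.elim_finite_subcover A (fun z => (hAclopen z).2)
    (fun z _ => mem_iUnion.mpr ⟨z, hAmem z⟩)
  set l := s.toList with hl
  set n := l.length with hn
  set Z : Fin n → Set ↥F := fun i => A (l.get i) with hZ
  have hZclopen : ∀ i, IsClopen (Z i) := fun i => hAclopen _
  set B : Fin n → Set ↥F := fun j => Z j \ ⋃ i ∈ {i : Fin n | i < j}, Z i with hB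
  have hBclopen : ∀ j, IsClopen (B j) :=
    fun j => (hZclopen j).diff ((toFinite _).isClopen_biUnion fun i _ => hZclopen i)
  -- every point of F is in some B
  have hBcover : ∀ z : ↥F, ∃ j, z ∈ B j := by
    intro z
    have : ∃ i : Fin n, z ∈ Z i := by
      have := hs (mem_univ z)
      rw [mem_iUnion₂] at this
      obtain ⟨w, hws, hzw⟩ := this
      obtain ⟨i, hi⟩ := List.mem_iff_get.mp (Finset.mem_toList.mpr hws)
      exact ⟨i, by show z ∈ A (l.get i); rw [hi]; exact hzw⟩
    set idx : Finset (Fin n) := Finset.univ.filter (fun i => z ∈ Z i) with hidx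
    have hne : idx.Nonempty := by
      obtain ⟨i, hi⟩ := this
      exact ⟨i, by simp [hidx, hi]⟩
    refine ⟨idx.min' hne, ?_, ?_⟩
    · have := idx.min'_mem hne
      simp only [hidx, Finset.mem_filter] at this
      exact this.2
    · intro hmem
      rw [mem_iUnion₂] at hmem
      obtain ⟨i, hilt, hzi⟩ := hmem
      have : idx.min' hne ≤ i := idx.min'_le i (by simp [hidx, hzi])
      exact absurd hilt (not_lt.mpr this)
  -- pairwise disjoint
  have hBdisj : ∀ i j, i ≠ j → Disjoint (B i) (B j) := by
    intro i j hij
    rcases hij.lt_or_gt with h | h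
    · rw [disjoint_left]
      intro z hzi hzj
      exact hzj.2 (mem_iUnion₂.mpr ⟨i, h, hzi.1⟩)
    · rw [disjoint_left]
      intro z hzi hzj
      exact hzi.2 (mem_iUnion₂.mpr ⟨j, h, hzj.1⟩)
  set K : Fin n → Set X := fun i => (↑) '' B i with hK
  have hKcomp : ∀ i, IsCompact (K i) :=
    fun i => ((hBclopen i).1.isCompact).image continuous_subtype_val
  have hKsq : ∀ i, K i ×ˢ K i ⊆ η := by
    rintro i ⟨u, v⟩ ⟨⟨u', hu', rfl⟩, ⟨v', hv', rfl⟩⟩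
    exact hAsq (l.get i) (⟨hu'.1, hv'.1⟩ : (u', v') ∈ A (l.get i) ×ˢ A (l.get i))
  have hKdisj : ∀ i j, i ≠ j → Disjoint (K i) (K j) :=
    fun i j hij => (disjoint_image_of_injective Subtype.val_injective (hBdisj i j hij))
  have hKcover : F ⊆ ⋃ i, K i := by
    intro z hz
    obtain ⟨j, hj⟩ := hBcover ⟨z, hz⟩
    exact mem_iUnion.mpr ⟨j, mem_image_of_mem _ hj⟩
  -- separation opens
  have hsep : ∀ i : Fin n, ∃ G H : Set X, IsOpen G ∧ IsOpen H ∧ K i ⊆ G ∧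
      (⋃ j ∈ {j : Fin n | j ≠ i}, K j) ⊆ H ∧ Disjoint G H := by
    intro i
    have hM : IsCompact (⋃ j ∈ {j : Fin n | j ≠ i}, K j) :=
      (toFinite _).isCompact_biUnion fun j _ => hKcomp j
    have hdisj : Disjoint (K i) (⋃ j ∈ {j : Fin n | j ≠ i}, K j) := by
      rw [disjoint_iUnion₂_right]
      exact fun j hj => hKdisj i j (Ne.symm hj)
    obtain ⟨G, H, hGo, hHo, hKG, hMH, hGH⟩ :=
      SeparatedNhds.of_isCompact_isCompact (hKcomp i) hM hdisj
    exact ⟨G, H, hGo, hHo, hKG, hMH, hGH⟩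
  choose G H hGo hHo hKG hMH hGH using hsep
  -- tube lemma opens
  have htube : ∀ i : Fin n, ∃ W : Set X, IsOpen W ∧ K i ⊆ W ∧ W ×ˢ W ⊆ η := by
    intro i
    obtain ⟨u, v, huo, hvo, hsu, htv, huv⟩ :=
      generalized_tube_lemma (hKcomp i) (hKcomp i) hη (hKsq i)
    exact ⟨u ∩ v, huo.inter hvo, subset_inter hsu htv,
      fun p hp => huv ⟨hp.1.1, hp.2.2⟩⟩
  choose W hWo hKW hWsq using htube
  refine ⟨n, fun i => W i ∩ G i ∩ ⋂ j, (if j = i then univ else H j), ?_, ?_, ?_, ?_⟩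
  · intro i
    refine ((hWo i).inter (hGo i)).inter (isOpen_iInter_of_finite fun j => ?_)
    split <;> [exact isOpen_univ; exact hHo j]
  · intro i j hij
    rw [disjoint_left]
    rintro z ⟨⟨-, hzG⟩, hzI⟩ ⟨⟨-, -⟩, hzI'⟩
    have hzH : z ∈ H i := by
      have := mem_iInter.mp hzI' i
      rwa [if_neg hij] at this
    exact (hGH i).le_bot ⟨hzG, hzH⟩
  · intro z hz
    obtain ⟨i, hi⟩ := mem_iUnion.mp (hKcover hz)
    refine mem_iUnion.mpr ⟨i, ⟨⟨hKW i hi, hKG i hi⟩, mem_iInter.mpr fun j => ?_⟩⟩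
    split
    · exact mem_univ z
    · next hji => exact mem_of_subset_of_mem (fun w hw => hMH j (mem_iUnion₂.mpr ⟨i, Ne.symm hji, hw⟩)) hi
  · intro i u hu v hv
    exact hWsq i ⟨hu.1.1, hv.1.1⟩

section Comp
variable {X : Type*} [TopologicalSpace X]

lemma setoid_class_eq (S : Setoid X) {x y : X} (h : S.r x y) :
    {z | S.r x z} = {z | S.r y z} :=
  Set.ext fun z => ⟨fun hz => S.trans (S.symm h) hz, fun hz => S.trans h hz⟩

/-- The relation "y is in the connected component of x inside the `S`-class of `x`". -/
def compSetoid (S : Setoid X) : Setoid X where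
  r x y := y ∈ connectedComponentIn {z | S.r x z} x
  iseqv := by
    constructor
    · exact fun x => mem_connectedComponentIn (S.refl x)
    · intro x y h
      have hS : S.r x y := connectedComponentIn_subset _ _ h
      have hFeq := setoid_class_eq S hS
      have hcc := connectedComponentIn_eq h
      have hx : x ∈ connectedComponentIn {z | S.r x z} x :=
        mem_connectedComponentIn (S.refl x)
      rw [hcc] at hx
      rwa [hFeq] at hx
    · intro x y z hxy hyz
      have hS : S.r x y := connectedComponentIn_subset _ _ hxy
      have hFeq := setoid_class_eq S hS
      have hcc := connectedComponentIn_eq hxy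
      rw [hcc, hFeq]
      exact hyz

lemma compSetoid_sub (S : Setoid X) {x y : X} (h : (compSetoid S).r x y) : S.r x y :=
  connectedComponentIn_subset _ _ h

lemma compSetoid_closed [CompactSpace X] [T2Space X] (S : Setoid X)
    (hcl : IsClosed {p : X × X | S.r p.1 p.2}) :
    IsClosed {p : X × X | (compSetoid S).r p.1 p.2} := by
  rw [← isOpen_compl_iff, isOpen_iff_mem_nhds]
  rintro ⟨x, y⟩ hxy
  by_cases hS : S.r x y
  case neg =>
    -- the complement of S is an open neighbourhood avoiding compSetoid
    refine Filter.mem_of_superset (hcl.isOpen_compl.mem_nhds hS) ?_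
    intro p hp hRp
    exact hp (compSetoid_sub S hRp)
  case pos =>
    set F : Set X := {z | S.r x z} with hF
    have hFc : IsClosed F := hcl.preimage (Continuous.prodMk_right x)
    haveI : CompactSpace ↥F := isCompact_iff_compactSpace.mp hFc.isCompact
    set xh : ↥F := ⟨x, S.refl x⟩
    set yh : ↥F := ⟨y, hS⟩
    have hyK : yh ∉ connectedComponent xh := by
      intro hmem
      apply hxy
      show y ∈ connectedComponentIn F x
      rw [connectedComponentIn_eq_image (show x ∈ F from S.refl x)]
      exact ⟨yh, hmem, rfl⟩
    -- find a clopen set separating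
    obtain ⟨Z, hZclopen, hxZ, hyZ⟩ : ∃ Z : Set ↥F, IsClopen Z ∧ xh ∈ Z ∧ yh ∉ Z := by
      rw [connectedComponent_eq_iInter_isClopen] at hyK
      rw [mem_iInter] at hyK
      push_neg at hyK
      obtain ⟨⟨Z, hZ, hxZ⟩, hyZ⟩ := hyK
      exact ⟨Z, hZ, hxZ, hyZ⟩
    set A : Set X := (↑) '' Z with hA
    set A' : Set X := (↑) '' Zᶜ with hA'
    have hAc : IsCompact A := (hZclopen.1.isCompact).image continuous_subtype_val
    have hA'c : IsCompact A' := (hZclopen.2.isClosed_compl.isCompact).image continuous_subtype_val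
    have hdisj : Disjoint A A' := by
      rw [disjoint_left]
      rintro a ⟨z, hz, rfl⟩ ⟨z', hz', hzz'⟩
      exact hz' (by rwa [← Subtype.coe_injective hzz'] at hz)
    obtain ⟨U, V, hUo, hVo, hAU, hA'V, hUV⟩ :=
      SeparatedNhds.of_isCompact_isCompact hAc hA'c hdisj
    -- the open saturated neighbourhood
    set O : Set X := Quotient.mk S ⁻¹' ((Quotient.mk S '' (U ∪ V)ᶜ)ᶜ) with hO
    have hOo : IsOpen O :=
      ((setoid_isClosedMap S hcl _ (hUo.union hVo).isClosed_compl).isOpen_compl).preimage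
        continuous_quot_mk
    have hcls : ∀ x' ∈ O, {z | S.r x' z} ⊆ U ∪ V := by
      intro x' hx' w hw
      by_contra hwUV
      exact hx' ⟨w, hwUV, (Quotient.sound hw).symm⟩
    have hxO : x ∈ O := by
      intro hmem
      obtain ⟨w, hw, hweq⟩ := hmem
      apply hw
      have hwF : w ∈ F := Quotient.eq.mp hweq.symm
      by_cases hwZ : (⟨w, hwF⟩ : ↥F) ∈ Z
      · exact Or.inl (hAU ⟨_, hwZ, rfl⟩)
      · exact Or.inr (hA'V ⟨_, hwZ, rfl⟩)
    have hxU : x ∈ U := hAU ⟨xh, hxZ, rfl⟩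
    have hyV : y ∈ V := hA'V ⟨yh, hyZ, rfl⟩
    refine Filter.mem_of_superset
      (((hOo.inter hUo).prod hVo).mem_nhds ⟨⟨hxO, hxU⟩, hyV⟩) ?_
    rintro ⟨x', y'⟩ ⟨⟨hx'O, hx'U⟩, hy'V⟩ hR
    have hCsub : connectedComponentIn {z | S.r x' z} x' ⊆ U :=
      IsPreconnected.subset_left_of_subset_union hUo hVo hUV
        ((connectedComponentIn_subset _ _).trans (hcls x' hx'O))
        ⟨x', mem_connectedComponentIn (S.refl x'), hx'U⟩
        isPreconnected_connectedComponentIn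
    exact hUV.le_bot ⟨hCsub hR, hy'V⟩

lemma compSetoid_r (S : Setoid X) (x y : X) :
    (compSetoid S).r x y ↔ y ∈ connectedComponentIn {z | S.r x z} x := Iff.rfl

lemma compSetoid_inv {T X : Type*} [TopologicalSpace X] [TopologicalSpace T] [Group T]
    [MulAction T X] [ContinuousSMul T X] (S : Setoid X)
    (hinv : ∀ (t : T) (x : X), (t • ·) '' {y | S.r x y} = {y | S.r (t • x) y}) :
    ∀ (t : T) (x : X), (t • ·) '' {y | (compSetoid S).r x y} = {y | (compSetoid S).r (t • x) y} := by
  intro t x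
  have hs : {y | (compSetoid S).r x y} = connectedComponentIn {z | S.r x z} x :=
    Set.ext fun y => compSetoid_r S x y
  have hs' : {y | (compSetoid S).r (t • x) y} = connectedComponentIn {z | S.r (t • x) z} (t • x) :=
    Set.ext fun y => compSetoid_r S (t • x) y
  rw [hs, hs']
  have h := (Homeomorph.smul (α := X) t).image_connectedComponentIn
    (s := {z | S.r x z}) (x := x) (S.refl x)
  have hcoe : ⇑(Homeomorph.smul (α := X) t) = (t • · : X → X) := rfl
  rw [hcoe] at h
  rw [h, hinv t x]

end Comp

/-- The quotient flow of the action of `T` on `X` by a `T`-invariant equivalence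
relation `S` is equicontinuous, with respect to the unique uniformity of the (compact
Hausdorff) quotient, which consists of all neighbourhoods of the diagonal: for every
neighbourhood `η` of the diagonal of `X/S` there is a neighbourhood `δ` of the diagonal
such that for all `t ∈ T`, the induced map `f^t` of `X/S` maps `δ` into `η`. Since the
quotient map is surjective and the induced action satisfies `t • ⟦x⟧ = ⟦t • x⟧`, this is
expressed via representatives. -/
def QuotientFlowEquicontinuous (T : Type*) {X : Type*} [TopologicalSpace X] [Group T]
    [MulAction T X] (S : Setoid X) : Prop :=
  ∀ η ∈ 𝓝ˢ (Set.diagonal (Quotient S)), ∃ δ ∈ 𝓝ˢ (Set.diagonal (Quotient S)),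
    ∀ (t : T) (x y : X), (Quotient.mk S x, Quotient.mk S y) ∈ δ →
      (Quotient.mk S (t • x), Quotient.mk S (t • y)) ∈ η

/-- Let `X` be a locally connected compact Hausdorff space and `T` a
topological group acting continuously on `X`. Then the equicontinuous structure
relation `Seq` — the smallest closed `T`-invariant equivalence relation on `X` whose
quotient flow is equicontinuous — is monotone: every equivalence class of `Seq`, i.e.
every point preimage of the factor map onto the maximal equicontinuous factor `X/Seq`,
is connected. -/
theorem stmt0 {T X : Type*} [TopologicalSpace X] [CompactSpace X] [T2Space X]
    [LocallyConnectedSpace X] [TopologicalSpace T] [Group T] [IsTopologicalGroup T]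
    [MulAction T X] [ContinuousSMul T X]
    (Seq : Setoid X)
    -- `Seq` is closed
    (hcl : IsClosed {p : X × X | Seq.r p.1 p.2})
    -- `Seq` is `T`-invariant
    (hinv : ∀ (t : T) (x : X), (t • ·) '' {y | Seq.r x y} = {y | Seq.r (t • x) y})
    -- the quotient flow `(X/Seq, T)` is equicontinuous
    (heq : QuotientFlowEquicontinuous T Seq)
    -- `Seq` is the smallest such relation
    (hmin : ∀ R : Setoid X, IsClosed {p : X × X | R.r p.1 p.2} →
      (∀ (t : T) (x : X), (t • ·) '' {y | R.r x y} = {y | R.r (t • x) y}) →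
      QuotientFlowEquicontinuous T R → ∀ x y : X, Seq.r x y → R.r x y) :
    ∀ x : X, IsConnected {y | Seq.r x y} := by
  classical
  set R : Setoid X := compSetoid Seq with hR
  have hRcl : IsClosed {p : X × X | R.r p.1 p.2} := compSetoid_closed Seq hcl
  have hRinv := compSetoid_inv Seq hinv
  haveI hT2S : T2Space (Quotient Seq) := setoid_t2 Seq hcl
  haveI hT2R : T2Space (Quotient R) := setoid_t2 R hRcl
  -- the quotient flow of R is equicontinuous
  have hReq : QuotientFlowEquicontinuous T R := by
    intro η hη
    obtain ⟨η₀, hη₀o, hdiag₀, hη₀sub⟩ := mem_nhdsSet_iff_exists.mp hη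
    set η' : Set (X × X) :=
      (fun p : X × X => (Quotient.mk R p.1, Quotient.mk R p.2)) ⁻¹' η₀ with hη'
    have hmkR : Continuous (Quotient.mk R) := continuous_quot_mk
    have hmkS : Continuous (Quotient.mk Seq) := continuous_quot_mk
    have hη'o : IsOpen η' := hη₀o.preimage
      ((hmkR.comp continuous_fst).prodMk (hmkR.comp continuous_snd))
    have hRsub : ∀ x y : X, R.r x y → (x, y) ∈ η' := by
      intro x y h
      exact hdiag₀ (show Quotient.mk R x = Quotient.mk R y from Quotient.sound h)
    -- per-fiber discretization
    have hfib : ∀ a : Quotient Seq, ∃ Ω : Set (Quotient Seq), IsOpen Ω ∧ a ∈ Ω ∧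
        ∀ D : Set X, D.Nonempty → IsPreconnected D → Quotient.mk Seq '' D ⊆ Ω →
          ∀ u ∈ D, ∀ v ∈ D, (u, v) ∈ η' := by
      intro a
      set x₀ := a.out with hx₀
      set F : Set X := {z | Seq.r x₀ z} with hFdef
      have hFc : IsClosed F := hcl.preimage (Continuous.prodMk_right x₀)
      have hcomp : ∀ z ∈ F, ∀ u ∈ connectedComponentIn F z,
          ∀ v ∈ connectedComponentIn F z, (u, v) ∈ η' := by
        intro z hz u hu v hv
        have hclass : F = {w | Seq.r z w} := setoid_class_eq Seq hz
        rw [hclass] at hu hv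
        have hzu : R.r z u := (compSetoid_r Seq z u).mpr hu
        have hzv : R.r z v := (compSetoid_r Seq z v).mpr hv
        exact hRsub u v (R.trans (R.symm hzu) hzv)
      obtain ⟨n, U, hUo, hUdisj, hFU, hUsq⟩ := fiber_discretize hFc hη'o hcomp
      refine ⟨(Quotient.mk Seq '' (⋃ i, U i)ᶜ)ᶜ,
        (setoid_isClosedMap Seq hcl _ (isOpen_iUnion hUo).isClosed_compl).isOpen_compl,
        ?_, ?_⟩
      · rintro ⟨w, hw, hweq⟩
        exact hw (hFU (show Seq.r x₀ w from Quotient.eq.mp (by rw [hx₀, Quotient.out_eq, hweq])))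
      · intro D hDne hDpre hDΩ u hu v hv
        have hDsub : D ⊆ ⋃ i, U i := by
          intro d hd
          by_contra hdU
          exact hDΩ (mem_image_of_mem _ hd) ⟨d, hdU, rfl⟩
        obtain ⟨d₀, hd₀⟩ := hDne
        obtain ⟨i, hi⟩ := mem_iUnion.mp (hDsub hd₀)
        have hDUi : D ⊆ U i := by
          set V : Set X := ⋃ j, ⋃ (_ : j ≠ i), U j with hV
          have hVo : IsOpen V := isOpen_iUnion fun j => isOpen_iUnion fun _ => hUo j
          have hdisjUV : Disjoint (U i) V := by
            rw [disjoint_iUnion_right]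
            intro j
            rw [disjoint_iUnion_right]
            intro hji
            exact hUdisj i j (Ne.symm hji)
          have hcover : D ⊆ U i ∪ V := by
            intro d hd
            obtain ⟨j, hj⟩ := mem_iUnion.mp (hDsub hd)
            by_cases hji : j = i
            · exact Or.inl (hji ▸ hj)
            · exact Or.inr (mem_iUnion.mpr ⟨j, mem_iUnion.mpr ⟨hji, hj⟩⟩)
          exact IsPreconnected.subset_left_of_subset_union (hUo i) hVo hdisjUV
            hcover ⟨d₀, hd₀, hi⟩ hDpre
        exact hUsq i u (hDUi hu) v (hDUi hv)
    choose Ω hΩo hΩmem hΩprop using hfib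
    obtain ⟨γ, hγ, hγΩ⟩ := lebesgue_nhdsSet hΩo
      (fun a _ => mem_iUnion.mpr ⟨a, hΩmem a⟩)
    obtain ⟨δS, hδS, hδSmod⟩ := heq γ hγ
    obtain ⟨w', hw'o, hw'diag, hw'tri⟩ := triangle_nhdsSet hδS
    -- the small relation on X
    set δ' : Set (X × X) := ⋃ C ∈ {C : Set X | IsOpen C ∧ IsPreconnected C ∧
        ∀ c ∈ C, ∀ c' ∈ C, (Quotient.mk Seq c, Quotient.mk Seq c') ∈ δS}, C ×ˢ C with hδ'
    have hδ'o : IsOpen δ' := isOpen_biUnion fun C hC => hC.1.prod hC.1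
    have hRδ' : ∀ x y : X, R.r x y → (x, y) ∈ δ' := by
      intro x y h
      set N : Set X := Quotient.mk Seq ⁻¹' {v | (Quotient.mk Seq x, v) ∈ w'} with hN
      have hNo : IsOpen N := (hw'o.preimage (Continuous.prodMk_right _)).preimage hmkS
      have hxN : x ∈ N := hw'diag (rfl : Quotient.mk Seq x = Quotient.mk Seq x)
      set C : Set X := connectedComponentIn N x with hC
      have hCo : IsOpen C := hNo.connectedComponentIn
      have hxC : x ∈ C := mem_connectedComponentIn hxN
      have hyC : y ∈ C := by
        have hsub : {z | Seq.r x z} ⊆ N := by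
          intro z hz
          show (Quotient.mk Seq x, Quotient.mk Seq z) ∈ w'
          rw [show Quotient.mk Seq z = Quotient.mk Seq x from (Quotient.sound hz).symm]
          exact hw'diag rfl
        exact connectedComponentIn_mono x hsub ((compSetoid_r Seq x y).mp h)
      have hCsmall : ∀ c ∈ C, ∀ c' ∈ C,
          (Quotient.mk Seq c, Quotient.mk Seq c') ∈ δS := by
        intro c hc c' hc'
        have h1 : (Quotient.mk Seq x, Quotient.mk Seq c) ∈ w' :=
          connectedComponentIn_subset N x hc
        have h2 : (Quotient.mk Seq x, Quotient.mk Seq c') ∈ w' :=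
          connectedComponentIn_subset N x hc'
        exact hw'tri _ _ _ h1 h2
      exact mem_biUnion ⟨hCo, isPreconnected_connectedComponentIn, hCsmall⟩ ⟨hxC, hyC⟩
    -- propagation
    have hprop : ∀ x y : X, (x, y) ∈ δ' → ∀ t : T,
        (Quotient.mk R (t • x), Quotient.mk R (t • y)) ∈ η₀ := by
      intro x y hxy t
      obtain ⟨C, hC, hmem⟩ := mem_iUnion₂.mp hxy
      obtain ⟨hCo, hCpre, hCsmall⟩ := hC
      obtain ⟨hxC, hyC⟩ := hmem
      set D : Set X := (t • ·) '' C with hD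
      have hDne : D.Nonempty := ⟨t • x, mem_image_of_mem _ hxC⟩
      have hDpre : IsPreconnected D := hCpre.image _ (continuous_const_smul t).continuousOn
      obtain ⟨a, ha⟩ := hγΩ (Quotient.mk Seq (t • x))
      have hDΩ : Quotient.mk Seq '' D ⊆ Ω a := by
        rintro _ ⟨_, ⟨c, hc, rfl⟩, rfl⟩
        exact ha (hδSmod t x c (hCsmall x hxC c hc))
      have := hΩprop a D hDne hDpre hDΩ (t • x) (mem_image_of_mem _ hxC)
        (t • y) (mem_image_of_mem _ hyC)
      exact this
    -- build δ on the quotient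
    refine ⟨((fun p : X × X => (Quotient.mk R p.1, Quotient.mk R p.2)) '' δ'ᶜ)ᶜ, ?_, ?_⟩
    · have hop : IsOpen (((fun p : X × X =>
          (Quotient.mk R p.1, Quotient.mk R p.2)) '' δ'ᶜ)ᶜ) :=
        (((hδ'o.isClosed_compl.isCompact).image
          ((hmkR.comp continuous_fst).prodMk (hmkR.comp continuous_snd))).isClosed).isOpen_compl
      refine (hop.mem_nhdsSet).mpr ?_
      rintro ⟨c₁, c₂⟩ hc ⟨⟨u, v⟩, huv, heq'⟩
      have h1 : Quotient.mk R u = c₁ := congrArg Prod.fst heq'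
      have h2 : Quotient.mk R v = c₂ := congrArg Prod.snd heq'
      have hcc : c₁ = c₂ := hc
      have hRuv : R.r u v := Quotient.eq.mp (h1.trans (hcc.trans h2.symm))
      exact huv (hRδ' u v hRuv)
    · intro t x y hxy
      have hδ'mem : (x, y) ∈ δ' := by
        by_contra h
        exact hxy ⟨(x, y), h, rfl⟩
      exact hη₀sub (hprop x y hδ'mem t)
  -- conclude
  have key := hmin R hRcl hRinv hReq
  intro x
  have hxx : x ∈ connectedComponentIn {z | Seq.r x z} x :=
    mem_connectedComponentIn (Seq.refl x)
  have hset : {y | Seq.r x y} = connectedComponentIn {z | Seq.r x z} x := by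
    apply Subset.antisymm
    · intro y hy
      exact (compSetoid_r Seq x y).mp (key x y hy)
    · exact connectedComponentIn_subset _ _
  rw [hset]
  exact ⟨⟨x, hxx⟩, isPreconnected_connectedComponentIn⟩
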